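/- ♣_w implies ♣_{w²}. -/

import Mathlib

open Cardinal Set

/-- The first uncountable ordinal. -/
noncomputable def ω₁ : Ordinal := (aleph 1).ord

/-- The set of limit ordinals below `ω₁`. -/
def LimOmega1 : Set Ordinal := {γ | γ < ω₁ ∧ Order.IsSuccLimit γ}

/-- `C` is a club (closed unbounded) subset of `ω₁`. -/
def IsClubIn (C : Set Ordinal) : Prop :=
  C ⊆ Iio ω₁ ∧
    (∀ δ, δ < ω₁ → δ ≠ 0 → (∀ α < δ, ∃ β ∈ C, α < β ∧ β < δ) → δ ∈ C) ∧
    (∀ α < ω₁, ∃ β ∈ C, α < β)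

/-- `S` is a stationary subset of `ω₁`: it meets every club subset of `ω₁`. -/
def IsStatIn (S : Set Ordinal) : Prop :=
  S ⊆ Iio ω₁ ∧ ∀ C, IsClubIn C → (S ∩ C).Nonempty

/-- The set of ordinals `s` has order type `ω`. -/
def HasOtpOmega (s : Set Ordinal) : Prop :=
  Ordinal.type (Subrel ((· < ·) : Ordinal → Ordinal → Prop) (· ∈ s)) = Ordinal.omega0

/-- `x γ` is a cofinal subset of `γ` of order type `ω`. -/
def IsLadderAt (γ : Ordinal) (s : Set Ordinal) : Prop :=
  s ⊆ Iio γ ∧ (∀ α < γ, ∃ β ∈ s, α ≤ β) ∧ HasOtpOmega s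

/-- `(x γ)_{γ ∈ Lim(ω₁)}` is a `♣_w`-sequence. -/
def ClubWSeq (x : Ordinal → Set Ordinal) : Prop :=
  (∀ γ ∈ LimOmega1, IsLadderAt γ (x γ)) ∧
    ∀ y : Set Ordinal, y ⊆ Iio ω₁ → #y = aleph 1 →
      ∃ γ ∈ LimOmega1, (x γ \ y).Finite

/-- `(x γ)_{γ ∈ Lim(ω₁)}` is a `♣_{w²}`-sequence. -/
def ClubW2Seq (x : Ordinal → Set Ordinal) : Prop :=
  (∀ γ ∈ LimOmega1, IsLadderAt γ (x γ)) ∧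
    ∀ y : Set Ordinal, y ⊆ Iio ω₁ → #y = aleph 1 →
      IsStatIn ({α ∈ LimOmega1 | (x α ∩ y).Finite} ∪ {α ∈ LimOmega1 | (x α \ y).Finite})

/-! ### Same-universe implication -/

lemma omega1_pos : (0 : Ordinal) < ω₁ := by
  simpa [ω₁, Cardinal.ord_zero] using
    Cardinal.ord_lt_ord.2 (aleph0_pos.trans aleph0_lt_aleph_one)

/-- Any subset of `Iio ω₁` has cardinality at most `ℵ₁`. -/
lemma card_le_of_subset_Iio {s : Set Ordinal} (hs : s ⊆ Iio ω₁) : #s ≤ aleph 1 := by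
  refine (mk_le_mk_of_subset hs).trans ?_
  rw [Ordinal.mk_Iio_ordinal]
  simp [ω₁, Cardinal.card_ord, Cardinal.lift_aleph]

/-- A club in `ω₁` has cardinality `ℵ₁`. -/
lemma club_card {C : Set Ordinal} (hC : IsClubIn C) : #C = aleph 1 := by
  refine le_antisymm (card_le_of_subset_Iio hC.1) ?_
  have hnc : ¬ C.Countable := by
    intro hcnt
    obtain ⟨β, hβC, -⟩ := hC.2.2 0 omega1_pos
    obtain ⟨f, hf⟩ := hcnt.exists_eq_range ⟨β, hβC⟩
    have hsup : iSup f < ω₁ := by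
      show iSup f < (aleph 1).ord
      have := Ordinal.iSup_lt_omega_one (f := f) fun n => by
        rw [← Cardinal.ord_aleph]; exact hC.1 (hf ▸ mem_range_self n)
      rwa [← Cardinal.ord_aleph] at this
    obtain ⟨β', hβ'C, hgt⟩ := hC.2.2 (iSup f) hsup
    rw [hf] at hβ'C
    obtain ⟨n, rfl⟩ := hβ'C
    exact absurd (le_ciSup (Ordinal.bddAbove_range f) n) (not_le.2 hgt)
  have h0 : ℵ₀ < #C := by
    rw [← not_le]
    intro hle
    exact hnc (Set.countable_coe_iff.1 (Cardinal.mk_le_aleph0_iff.1 hle))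
  calc aleph 1 = Order.succ ℵ₀ := Cardinal.succ_aleph0.symm
    _ ≤ #C := Order.succ_le_of_lt h0

/-- If all but finitely many points of a ladder at `γ` lie in a club `C`, then `γ ∈ C`. -/
lemma mem_club_of_ladder {C : Set Ordinal} (hC : IsClubIn C) {γ : Ordinal}
    (hγ : γ ∈ LimOmega1) {s : Set Ordinal} (hs : IsLadderAt γ s)
    (hfin : (s \ C).Finite) : γ ∈ C := by
  apply hC.2.1 γ hγ.1 hγ.2.pos.ne'
  intro α hα
  set F := insert α (s \ C) with hF
  have hFfin : F.Finite := hfin.insert α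
  have hFsub : F ⊆ Iio γ := by
    intro β hβ
    rcases hβ with rfl | hβ
    · exact hα
    · exact hs.1 hβ.1
  have hbγ : sSup F < γ := hFsub ((insert_nonempty _ _).csSup_mem hFfin)
  obtain ⟨β, hβs, hβge⟩ := hs.2.1 (Order.succ (sSup F)) (hγ.2.succ_lt hbγ)
  have hble : ∀ z ∈ F, z ≤ sSup F := fun z hz => le_csSup hFfin.bddAbove hz
  have hβgt : sSup F < β := lt_of_lt_of_le (Order.lt_succ _) hβge
  refine ⟨β, ?_, lt_of_le_of_lt (hble α (mem_insert _ _)) hβgt, hs.1 hβs⟩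
  by_contra hβC
  exact absurd (hble β (mem_insert_of_mem _ ⟨hβs, hβC⟩)) (not_le.2 hβgt)

/-- The same-universe version of the theorem. -/
lemma clubW_implies_clubW2_same {x : Ordinal → Set Ordinal} (hx : ClubWSeq x) :
    ClubW2Seq x := by
  obtain ⟨hx1, hx2⟩ := hx
  refine ⟨hx1, ?_⟩
  intro y hy hycard
  constructor
  · rintro α (hα | hα) <;> exact hα.1.1
  · intro C hC
    by_cases hcase : #(↥(y ∩ C)) = aleph 1
    · obtain ⟨γ, hγlim, hfin⟩ := hx2 (y ∩ C) (fun a ha => hy ha.1) hcase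
      have hfy : (x γ \ y).Finite :=
        hfin.subset (diff_subset_diff_right inter_subset_left)
      have hfC : (x γ \ C).Finite :=
        hfin.subset (diff_subset_diff_right inter_subset_right)
      exact ⟨γ, Or.inr ⟨hγlim, hfy⟩, mem_club_of_ladder hC hγlim (hx1 γ hγlim) hfC⟩
    · have hcard : #(↥(C \ y)) = aleph 1 := by
        by_contra hne
        have h1 : #(↥(y ∩ C)) < aleph 1 :=
          lt_of_le_of_ne (card_le_of_subset_Iio fun a ha => hy ha.1) hcase
        have h2 : #(↥(C \ y)) < aleph 1 :=
          lt_of_le_of_ne (card_le_of_subset_Iio fun a ha => hC.1 ha.1) hne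
        have hsub : C ⊆ (y ∩ C) ∪ (C \ y) := by
          intro a ha
          by_cases hay : a ∈ y
          · exact Or.inl ⟨hay, ha⟩
          · exact Or.inr ⟨ha, hay⟩
        have hle : #C ≤ #(↥(y ∩ C)) + #(↥(C \ y)) :=
          (mk_le_mk_of_subset hsub).trans (mk_union_le _ _)
        have hlt : #(↥(y ∩ C)) + #(↥(C \ y)) < aleph 1 :=
          Cardinal.add_lt_of_lt (aleph0_le_aleph 1) h1 h2
        exact absurd (club_card hC) (ne_of_lt (hle.trans_lt hlt))
      obtain ⟨γ, hγlim, hfin⟩ := hx2 (C \ y) (fun a ha => hC.1 ha.1) hcard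
      have hfC : (x γ \ C).Finite :=
        hfin.subset (diff_subset_diff_right diff_subset)
      have hfy : (x γ ∩ y).Finite := by
        refine hfin.subset ?_
        rintro a ⟨ha1, ha2⟩
        exact ⟨ha1, fun hc => hc.2 ha2⟩
      exact ⟨γ, Or.inl ⟨hγlim, hfy⟩, mem_club_of_ladder hC hγlim (hx1 γ hγlim) hfC⟩

/-! ### Universe transfer along `Ordinal.lift` -/

universe v

lemma ordLift_injective : Function.Injective (Ordinal.lift.{v, 0}) :=
  fun _ _ h => Ordinal.lift_inj.1 h

lemma lift_omega1 : Ordinal.lift.{v, 0} ω₁.{0} = ω₁.{v} := by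
  show Ordinal.lift.{v, 0} (aleph 1).ord = (aleph 1).ord
  rw [Cardinal.lift_ord]
  congr 1
  rw [Cardinal.lift_aleph]
  simp

open scoped Classical in
/-- A choice of preimage of an ordinal under `Ordinal.lift`. -/
noncomputable def odown (γ : Ordinal.{v}) : Ordinal.{0} :=
  if h : ∃ γ₀ : Ordinal.{0}, Ordinal.lift.{v, 0} γ₀ = γ then h.choose else 0

lemma odown_lift (γ₀ : Ordinal.{0}) : odown (Ordinal.lift.{v, 0} γ₀) = γ₀ := by
  have h : ∃ γ₀' : Ordinal.{0}, Ordinal.lift.{v, 0} γ₀' = Ordinal.lift.{v, 0} γ₀ := ⟨γ₀, rfl⟩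
  rw [odown, dif_pos h]
  exact ordLift_injective h.choose_spec

lemma lift_odown {γ : Ordinal.{v}} (h : γ < ω₁.{v}) :
    Ordinal.lift.{v, 0} (odown γ) = γ := by
  rw [← lift_omega1] at h
  obtain ⟨γ₀, -, rfl⟩ := Ordinal.lt_lift_iff.1 h
  rw [odown_lift]

lemma lim_lift {γ : Ordinal.{0}} :
    Ordinal.lift.{v, 0} γ ∈ LimOmega1.{v} ↔ γ ∈ LimOmega1.{0} := by
  constructor
  · rintro ⟨h1, h2⟩
    rw [← lift_omega1, Ordinal.lift_lt] at h1
    exact ⟨h1, Ordinal.isSuccLimit_lift.1 h2⟩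
  · rintro ⟨h1, h2⟩
    refine ⟨?_, Ordinal.isSuccLimit_lift.2 h2⟩
    rw [← lift_omega1]
    exact Ordinal.lift_lt.2 h1


lemma hasOtpOmega_iff_nat {s : Set Ordinal.{u}} :
    HasOtpOmega s ↔ Nonempty (Subrel ((· < ·) : Ordinal.{u} → Ordinal.{u} → Prop) (· ∈ s) ≃r
      ((· < ·) : ℕ → ℕ → Prop)) := by
  have key := Ordinal.lift_type_eq.{u + 1, 0, 0}
    (r := Subrel ((· < ·) : Ordinal.{u} → Ordinal.{u} → Prop) (· ∈ s))
    (s := ((· < ·) : ℕ → ℕ → Prop))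
  rw [Ordinal.lift_id', Ordinal.type_nat_lt, Ordinal.lift_omega0] at key
  exact key

lemma hasOtp_image {s : Set Ordinal.{0}} :
    HasOtpOmega (Ordinal.lift.{v, 0} '' s) ↔ HasOtpOmega s := by
  have hiso : Subrel ((· < ·) : Ordinal.{0} → Ordinal.{0} → Prop) (· ∈ s) ≃r
      Subrel ((· < ·) : Ordinal.{v} → Ordinal.{v} → Prop) (· ∈ Ordinal.lift.{v, 0} '' s) := by
    refine ⟨Equiv.Set.image _ s ordLift_injective, ?_⟩
    intro a b
    rw [subrel_val, subrel_val]
    simp [Equiv.Set.image_apply, Ordinal.lift_lt]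
  rw [hasOtpOmega_iff_nat, hasOtpOmega_iff_nat]
  exact ⟨fun ⟨f⟩ => ⟨hiso.trans f⟩, fun ⟨f⟩ => ⟨hiso.symm.trans f⟩⟩

lemma ladder_up {γ : Ordinal.{0}} {s : Set Ordinal.{0}} (h : IsLadderAt γ s) :
    IsLadderAt (Ordinal.lift.{v, 0} γ) (Ordinal.lift.{v, 0} '' s) := by
  refine ⟨?_, ?_, hasOtp_image.2 h.2.2⟩
  · rintro _ ⟨a, ha, rfl⟩
    exact Ordinal.lift_lt.2 (h.1 ha)
  · intro α hα
    obtain ⟨α₀, hα₀, rfl⟩ := Ordinal.lt_lift_iff.1 hα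
    obtain ⟨β, hβs, hβ⟩ := h.2.1 α₀ hα₀
    exact ⟨Ordinal.lift.{v, 0} β, mem_image_of_mem _ hβs, Ordinal.lift_le.2 hβ⟩

lemma ladder_down {γ : Ordinal.{0}} {s' : Set Ordinal.{v}}
    (h : IsLadderAt (Ordinal.lift.{v, 0} γ) s') :
    IsLadderAt γ (Ordinal.lift.{v, 0} ⁻¹' s') := by
  have hrg : s' ⊆ range (Ordinal.lift.{v, 0}) := by
    intro a ha
    obtain ⟨a₀, -, rfl⟩ := Ordinal.lt_lift_iff.1 (h.1 ha)
    exact mem_range_self a₀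
  have himg : Ordinal.lift.{v, 0} '' (Ordinal.lift.{v, 0} ⁻¹' s') = s' :=
    image_preimage_eq_of_subset hrg
  refine ⟨?_, ?_, ?_⟩
  · intro β hβ
    exact Ordinal.lift_lt.1 (h.1 hβ)
  · intro α hα
    obtain ⟨β', hβ's, hβ'⟩ := h.2.1 (Ordinal.lift.{v, 0} α) (Ordinal.lift_lt.2 hα)
    obtain ⟨β, rfl⟩ := hrg hβ's
    exact ⟨β, hβ's, Ordinal.lift_le.1 hβ'⟩
  · have := h.2.2
    rw [← himg] at this
    exact hasOtp_image.1 this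

lemma card_image_iff {s : Set Ordinal.{0}} :
    #(↥(Ordinal.lift.{v, 0} '' s)) = aleph 1 ↔ #s = aleph 1 := by
  have key : Cardinal.lift.{1} #(↥(Ordinal.lift.{v, 0} '' s)) = Cardinal.lift.{v + 1} #s :=
    Cardinal.mk_image_eq_lift _ s ordLift_injective
  have la : Cardinal.lift.{1, v + 1} (aleph 1) = Cardinal.lift.{v + 1, 1} (aleph 1) := by
    rw [Cardinal.lift_aleph, Cardinal.lift_aleph]
    simp
  constructor
  · intro h
    have h2 : Cardinal.lift.{v + 1, 1} #s = Cardinal.lift.{v + 1, 1} (aleph 1) := by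
      rw [← key, h]
      exact la
    exact Cardinal.lift_inj.1 h2
  · intro h
    have h2 : Cardinal.lift.{1, v + 1} #(↥(Ordinal.lift.{v, 0} '' s)) =
        Cardinal.lift.{1, v + 1} (aleph 1) := by
      rw [key, h]
      exact la.symm
    exact Cardinal.lift_inj.1 h2

lemma lt_omega1_down {a : Ordinal.{0}} (h : Ordinal.lift.{v, 0} a < ω₁.{v}) :
    a < ω₁.{0} := by
  rw [← lift_omega1, Ordinal.lift_lt] at h
  exact h

/-- Transfer a `♣_w`-sequence down to universe `0`. -/
lemma clubW_down (h : ∃ x : Ordinal.{v} → Set Ordinal.{v}, ClubWSeq x) :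
    ∃ x₀ : Ordinal.{0} → Set Ordinal.{0}, ClubWSeq x₀ := by
  obtain ⟨x, hx1, hx2⟩ := h
  refine ⟨fun γ => Ordinal.lift.{v, 0} ⁻¹' x (Ordinal.lift.{v, 0} γ), ?_, ?_⟩
  · intro γ hγ
    exact ladder_down (hx1 _ (lim_lift.2 hγ))
  · intro y hy hcard
    obtain ⟨γ', hγ'lim, hfin⟩ := hx2 (Ordinal.lift.{v, 0} '' y)
      (by
        rintro _ ⟨a, ha, rfl⟩
        rw [mem_Iio, ← lift_omega1, Ordinal.lift_lt]
        exact hy ha)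
      (card_image_iff.2 hcard)
    obtain ⟨γ₀, rfl⟩ : ∃ γ₀, Ordinal.lift.{v, 0} γ₀ = γ' := ⟨odown γ', lift_odown hγ'lim.1⟩
    refine ⟨γ₀, lim_lift.1 hγ'lim, ?_⟩
    refine (hfin.preimage (ordLift_injective.injOn)).subset ?_
    rintro a ⟨ha1, ha2⟩
    refine ⟨ha1, fun hc => ha2 ?_⟩
    obtain ⟨b, hb, hba⟩ := hc
    rwa [← ordLift_injective hba]

/-- Transfer a `♣_{w²}`-sequence up from universe `0`. -/
lemma clubW2_up (h : ∃ x₀ : Ordinal.{0} → Set Ordinal.{0}, ClubW2Seq x₀) :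
    ∃ x : Ordinal.{v} → Set Ordinal.{v}, ClubW2Seq x := by
  obtain ⟨x₀, hx1, hx2⟩ := h
  refine ⟨fun γ => Ordinal.lift.{v, 0} '' x₀ (odown γ), ?_, ?_⟩
  · intro γ hγ
    have hlow : Ordinal.lift.{v, 0} (odown γ) = γ := lift_odown hγ.1
    have hlim : odown γ ∈ LimOmega1.{0} := lim_lift.1 (by rwa [hlow])
    have := ladder_up.{v} (hx1 _ hlim)
    rwa [hlow] at this
  · intro y hy hcard
    have hrg : y ⊆ range (Ordinal.lift.{v, 0}) := by
      intro a ha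
      have := hy ha
      rw [mem_Iio, ← lift_omega1] at this
      obtain ⟨a₀, -, rfl⟩ := Ordinal.lt_lift_iff.1 this
      exact mem_range_self a₀
    have himg : Ordinal.lift.{v, 0} '' (Ordinal.lift.{v, 0} ⁻¹' y) = y :=
      image_preimage_eq_of_subset hrg
    set y₀ := Ordinal.lift.{v, 0} ⁻¹' y with hy₀
    have hy₀sub : y₀ ⊆ Iio ω₁.{0} := fun a ha => lt_omega1_down (hy ha)
    have hy₀card : #y₀ = aleph 1 := card_image_iff.1 (by rwa [himg])
    have hstat := hx2 y₀ hy₀sub hy₀card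
    constructor
    · rintro α (hα | hα) <;> exact hα.1.1
    · intro C hC
      -- pull the club back to universe 0
      set C₀ := Ordinal.lift.{v, 0} ⁻¹' C with hC₀
      have hC₀club : IsClubIn C₀ := by
        refine ⟨fun a ha => lt_omega1_down (hC.1 ha), ?_, ?_⟩
        · intro δ hδ hδ0 happ
          show Ordinal.lift.{v, 0} δ ∈ C
          have hδpos : (0 : Ordinal.{v}) < Ordinal.lift.{v, 0} δ := by
            have : (0 : Ordinal.{0}) < δ := pos_iff_ne_zero.2 hδ0
            simpa using Ordinal.lift_lt.2 this
          refine hC.2.1 _ (by rw [← lift_omega1]; exact Ordinal.lift_lt.2 hδ) hδpos.ne' ?_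
          intro α hα
          obtain ⟨α₀, hα₀, rfl⟩ := Ordinal.lt_lift_iff.1 hα
          obtain ⟨β, hβC₀, hβ1, hβ2⟩ := happ α₀ hα₀
          exact ⟨Ordinal.lift.{v, 0} β, hβC₀, Ordinal.lift_lt.2 hβ1, Ordinal.lift_lt.2 hβ2⟩
        · intro α hα
          have : Ordinal.lift.{v, 0} α < ω₁.{v} := by
            rw [← lift_omega1]; exact Ordinal.lift_lt.2 hα
          obtain ⟨β', hβ'C, hβ'⟩ := hC.2.2 _ this
          obtain ⟨β, rfl⟩ : ∃ β, Ordinal.lift.{v, 0} β = β' :=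
            ⟨odown β', lift_odown (hC.1 hβ'C)⟩
          exact ⟨β, hβ'C, Ordinal.lift_lt.1 hβ'⟩
      obtain ⟨α, hαS, hαC₀⟩ := hstat.2 C₀ hC₀club
      have hdown : odown (Ordinal.lift.{v, 0} α) = α := odown_lift α
      refine ⟨Ordinal.lift.{v, 0} α, ?_, hαC₀⟩
      rcases hαS with ⟨hlim, hfin⟩ | ⟨hlim, hfin⟩
      · refine Or.inl ⟨lim_lift.2 hlim, ?_⟩
        show ((Ordinal.lift.{v, 0} '' x₀ (odown (Ordinal.lift.{v, 0} α))) ∩ y).Finite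
        rw [hdown, ← himg, ← image_inter ordLift_injective]
        exact hfin.image _
      · refine Or.inr ⟨lim_lift.2 hlim, ?_⟩
        show ((Ordinal.lift.{v, 0} '' x₀ (odown (Ordinal.lift.{v, 0} α))) \ y).Finite
        rw [hdown, ← himg, ← image_diff ordLift_injective]
        exact hfin.image _

theorem clubW_implies_clubW2 (h : ∃ x, ClubWSeq x) : ∃ x, ClubW2Seq x := by
  obtain ⟨x₀, hx₀⟩ := clubW_down h
  exact clubW2_up ⟨x₀, clubW_implies_clubW2_same hx₀⟩
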